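/- Let a, b, z > 0 and c < 0 with c ≠ −1, and assume (1+c)z/a + b > 0. Define Z(t) = −(a/(1+c))·(b + ct) + (z + ab/(1+c))·(b/(b+ct))^{1/c} and τ^z = ((1+c)z/a + b)^{c/(c+1)} · b^{1/(c+1)} · c^{−1} − b/c. Then 0 < τ^z < −b/c, Z(τ^z) = 0, and Z(t) > 0 for all t ∈ [0, τ^z). In particular, τ^z is the smallest positive zero of Z, and the order position hits zero strictly before the bid-queue depletion time τ^b = −b/c. -/

import Mathlib

open Real

/-- Execution time of the order position in the fluid limit, case `c < 0`, `c ≠ -1`: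
`τᶻ = ((1+c)z/a + b)^(c/(c+1)) b^(1/(c+1)) c⁻¹ - b/c` satisfies `0 < τᶻ < -b/c`,
`Z τᶻ = 0`, and `Z t > 0` on `[0, τᶻ)`; in particular the order position hits zero
strictly before the bid-queue depletion time `τᵇ = -b/c`. -/
theorem execution_time_general_case
    (a b z c : ℝ) (ha : 0 < a) (hb : 0 < b) (hz : 0 < z)
    (hc : c < 0) (hc1 : c ≠ -1) (hpos : 0 < (1 + c) * z / a + b)
    (Z : ℝ → ℝ)
    (hZ : ∀ t, Z t = -(a / (1 + c)) * (b + c * t)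
        + (z + a * b / (1 + c)) * (b / (b + c * t)) ^ (1 / c))
    (τz : ℝ)
    (hτz : τz = ((1 + c) * z / a + b) ^ (c / (c + 1)) * b ^ (1 / (c + 1)) * c⁻¹ - b / c) :
    0 < τz ∧ τz < -b / c ∧ Z τz = 0 ∧ ∀ t, 0 ≤ t → t < τz → 0 < Z t := by
  have hc0 : c ≠ 0 := ne_of_lt hc
  have hc1' : c + 1 ≠ 0 := by
    intro h; exact hc1 (by linarith)
  have hc1'' : 1 + c ≠ 0 := by
    intro h; exact hc1 (by linarith)
  set P : ℝ := (1 + c) * z / a + b with hP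
  have hPpos : 0 < P := hpos
  set K : ℝ := P ^ (c / (c + 1)) * b ^ (1 / (c + 1)) with hKdef
  have hKpos : 0 < K := mul_pos (Real.rpow_pos_of_pos hPpos _) (Real.rpow_pos_of_pos hb _)
  -- b as a product of rpows
  have hbsplit : b = b ^ (c / (c + 1)) * b ^ (1 / (c + 1)) := by
    rw [← Real.rpow_add hb, show c / (c + 1) + 1 / (c + 1) = 1 by field_simp, Real.rpow_one]
  -- K < b
  have hKb : K < b := by
    have hmain : P ^ (c / (c + 1)) < b ^ (c / (c + 1)) := by
      rcases lt_or_gt_of_ne hc1' with h | h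
      · -- c < -1 : exponent positive, P < b
        have hα : 0 < c / (c + 1) := div_pos_of_neg_of_neg hc (by linarith)
        have hPb : P < b := by
          have : (1 + c) * z / a < 0 :=
            div_neg_of_neg_of_pos (mul_neg_of_neg_of_pos (by linarith) hz) ha
          simp only [hP]; linarith
        exact Real.rpow_lt_rpow hPpos.le hPb hα
      · -- -1 < c < 0 : exponent negative, b < P
        have hα : c / (c + 1) < 0 := div_neg_of_neg_of_pos hc (by linarith)
        have hbP : b < P := by
          have : 0 < (1 + c) * z / a :=
            div_pos (mul_pos (by linarith) hz) ha
          simp only [hP]; linarith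
        exact Real.rpow_lt_rpow_of_neg hb hbP hα
    calc K = P ^ (c / (c + 1)) * b ^ (1 / (c + 1)) := hKdef
      _ < b ^ (c / (c + 1)) * b ^ (1 / (c + 1)) :=
        mul_lt_mul_of_pos_right hmain (Real.rpow_pos_of_pos hb _)
      _ = b := hbsplit.symm
  -- key algebraic identity
  have hKey : K ^ ((c + 1) / c) = P * b ^ (1 / c) := by
    rw [hKdef, Real.mul_rpow (Real.rpow_pos_of_pos hPpos _).le (Real.rpow_pos_of_pos hb _).le,
      ← Real.rpow_mul hPpos.le, ← Real.rpow_mul hb.le,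
      show c / (c + 1) * ((c + 1) / c) = 1 by field_simp,
      show 1 / (c + 1) * ((c + 1) / c) = 1 / c by field_simp, Real.rpow_one]
  have hτK : b + c * τz = K := by
    rw [hτz]; field_simp; ring
  -- for positive s, the expression in Z rewrites via K
  have hexp : ∀ s : ℝ, 0 < s →
      P * (b / s) ^ (1 / c) = K ^ ((c + 1) / c) * s ^ (-(1 / c)) := by
    intro s hs
    rw [Real.div_rpow hb.le hs.le, hKey, Real.rpow_neg hs.le, div_eq_mul_inv, mul_assoc]
  have hself : ∀ s : ℝ, 0 < s → s = s ^ ((c + 1) / c) * s ^ (-(1 / c)) := by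
    intro s hs
    rw [← Real.rpow_add hs, show (c + 1) / c + -(1 / c) = 1 by field_simp; ring, Real.rpow_one]
  have hM : z + a * b / (1 + c) = a / (1 + c) * P := by
    field_simp [hP]; rw [hP]; field_simp
  -- Z in factored form
  have hZfact : ∀ t : ℝ, Z t
      = a / (1 + c) * (P * (b / (b + c * t)) ^ (1 / c) - (b + c * t)) := by
    intro t; rw [hZ t, hM]; ring
  refine ⟨?_, ?_, ?_, ?_⟩
  · -- 0 < τz
    rw [hτz]
    have h1 : P ^ (c / (c + 1)) * b ^ (1 / (c + 1)) * c⁻¹ - b / c = (K - b) * c⁻¹ := by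
      rw [hKdef]; field_simp
    rw [h1]
    exact mul_pos_of_neg_of_neg (by linarith) (inv_lt_zero.mpr hc)
  · -- τz < -b/c
    rw [hτz]
    have h2 : P ^ (c / (c + 1)) * b ^ (1 / (c + 1)) * c⁻¹ = K * c⁻¹ := by rw [hKdef]
    rw [h2]
    have h3 : K * c⁻¹ < 0 := mul_neg_of_pos_of_neg hKpos (inv_lt_zero.mpr hc)
    have h4 : -b / c = -(b / c) := by ring
    linarith
  · -- Z τz = 0
    rw [hZfact τz, hτK, hexp K hKpos, ← hself K hKpos]
    ring
  · -- positivity on [0, τz)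
    intro t ht htz
    have hsK : K < b + c * t := by
      have : c * t > c * τz := by
        exact mul_lt_mul_of_neg_left htz hc
      linarith [hτK]
    have hs : 0 < b + c * t := lt_trans hKpos hsK
    rw [hZfact t, hexp _ hs]
    nth_rewrite 2 [hself _ hs]
    rw [show K ^ ((c + 1) / c) * (b + c * t) ^ (-(1 / c))
        - (b + c * t) ^ ((c + 1) / c) * (b + c * t) ^ (-(1 / c))
        = (K ^ ((c + 1) / c) - (b + c * t) ^ ((c + 1) / c)) * (b + c * t) ^ (-(1 / c)) by ring]
    have hsneg : (0:ℝ) < (b + c * t) ^ (-(1 / c)) := Real.rpow_pos_of_pos hs _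
    rcases lt_or_gt_of_ne hc1' with h | h
    · -- c < -1 : (c+1)/c > 0, a/(1+c) < 0
      have hβ : 0 < (c + 1) / c := div_pos_of_neg_of_neg (by linarith) hc
      have hlt : K ^ ((c + 1) / c) < (b + c * t) ^ ((c + 1) / c) :=
        Real.rpow_lt_rpow hKpos.le hsK hβ
      have h1 : a / (1 + c) < 0 := div_neg_of_pos_of_neg ha (by linarith)
      have h2 : (K ^ ((c + 1) / c) - (b + c * t) ^ ((c + 1) / c)) * (b + c * t) ^ (-(1 / c)) < 0 :=
        mul_neg_of_neg_of_pos (by linarith) hsneg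
      exact mul_pos_of_neg_of_neg h1 h2
    · -- -1 < c < 0 : (c+1)/c < 0, a/(1+c) > 0
      have hβ : (c + 1) / c < 0 := div_neg_of_pos_of_neg (by linarith) hc
      have hlt : (b + c * t) ^ ((c + 1) / c) < K ^ ((c + 1) / c) :=
        Real.rpow_lt_rpow_of_neg hKpos hsK hβ
      have h1 : 0 < a / (1 + c) := div_pos ha (by linarith)
      have h2 : 0 < (K ^ ((c + 1) / c) - (b + c * t) ^ ((c + 1) / c)) * (b + c * t) ^ (-(1 / c)) :=
        mul_pos (by linarith) hsneg
      exact mul_pos h1 h2
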